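/- arXiv:2107.08965 — 3 statements merged into one kernel-verified Lean document; each statement's English description precedes it below -/
import Mathlib

section
/- In the hardness instance, if 20·e < 3·n, then in every allocation A there exists an agent i with v_i(A_i) ≤ 4. -/
open Finset

variable {G : Type*}

/-- Agent `i`'s valuation in the hardness instance: goods in `T i` are worth 1,
all other goods are worth `4/5`. -/
def hardVal [DecidableEq G] (T : Finset G) (A : Finset G) : ℚ :=
  ((A ∩ T).card : ℚ) + (4 / 5) * ((A \ T).card : ℚ)

/-- An allocation: pairwise disjoint bundles covering all of `G`. -/
def IsAllocation {N : Type*} [Fintype N] [Fintype G] [DecidableEq G]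
    (A : N → Finset G) : Prop :=
  (Set.univ : Set N).PairwiseDisjoint A ∧ Finset.univ.biUnion A = (Finset.univ : Finset G)

/-- Lemma 5.3: in the hardness instance (with `20e < 3n`), every allocation has an
agent with valuation at most 4. -/
theorem stmt15 [Fintype G] [DecidableEq G] (n e : ℕ) (hn : 1 ≤ n)
    (V D : Finset G) (hVD : Disjoint V D) (hcover : V ∪ D = (Finset.univ : Finset G))
    (hV : V.card = 4 * n) (hD : D.card = 5 * (2 * n + e))
    (T : Fin (3 * n) → Finset G) (hT : ∀ i, T i ⊆ V ∧ (T i).card = 4)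
    (he : 20 * e < 3 * n)
    (A : Fin (3 * n) → Finset G) (hA : IsAllocation A) :
    ∃ i : Fin (3 * n), hardVal (T i) (A i) ≤ 4 := by
  by_contra hcon
  push_neg at hcon
  obtain ⟨hdisj, hcov⟩ := hA
  -- total number of goods
  have hdisj' : ∀ i ∈ (Finset.univ : Finset (Fin (3 * n))), ∀ j ∈ Finset.univ,
      i ≠ j → Disjoint (A i) (A j) := fun i _ j _ hij =>
    hdisj (Set.mem_univ i) (Set.mem_univ j) hij
  have hsumcard : ∑ i, (A i).card = 14 * n + 5 * e := by
    have h1 := Finset.card_biUnion hdisj'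
    rw [hcov] at h1
    have h2 : (Finset.univ : Finset G).card = 14 * n + 5 * e := by
      rw [← hcover, Finset.card_union_of_disjoint hVD, hV, hD]; ring
    omega
  -- sum of intersections with V is at most |V|
  have hsumint : ∑ i, (A i ∩ T i).card ≤ 4 * n := by
    have hle : ∑ i, (A i ∩ T i).card ≤ ∑ i, (A i ∩ V).card := by
      apply Finset.sum_le_sum
      intro i _
      exact Finset.card_le_card (Finset.inter_subset_inter le_rfl (hT i).1)
    have hdV : ∀ i ∈ (Finset.univ : Finset (Fin (3 * n))), ∀ j ∈ Finset.univ,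
        i ≠ j → Disjoint (A i ∩ V) (A j ∩ V) := fun i hi j hj hij =>
      (hdisj' i hi j hj hij).mono Finset.inter_subset_left Finset.inter_subset_left
    have h1 := Finset.card_biUnion hdV
    have h2 : Finset.univ.biUnion (fun i => A i ∩ V) ⊆ V := by
      intro x hx
      simp only [Finset.mem_biUnion, Finset.mem_inter] at hx
      obtain ⟨i, _, _, hxV⟩ := hx
      exact hxV
    have h3 := Finset.card_le_card h2
    rw [h1, hV] at h3
    omega
  -- per-agent lower bound
  have hper : ∀ i : Fin (3 * n), 21 ≤ (A i ∩ T i).card + 4 * (A i).card := by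
    intro i
    have h4 := hcon i
    have hsplit : (A i ∩ T i).card + (A i \ T i).card = (A i).card :=
      Finset.card_inter_add_card_sdiff _ _
    have hq : (20 : ℚ) < ((A i ∩ T i).card + 4 * (A i).card : ℕ) := by
      have : (((A i ∩ T i).card + 4 * (A i).card : ℕ) : ℚ)
          = 5 * hardVal (T i) (A i) := by
        unfold hardVal
        push_cast [← hsplit]
        ring
      rw [this]
      linarith
    exact_mod_cast hq
  -- sum up
  have hsum : 21 * (3 * n) ≤ ∑ i : Fin (3 * n), ((A i ∩ T i).card + 4 * (A i).card) := by
    calc 21 * (3 * n) = ∑ _i : Fin (3 * n), 21 := by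
          simp [Finset.sum_const, Finset.card_univ, Nat.mul_comm]
      _ ≤ _ := Finset.sum_le_sum (fun i _ => hper i)
  rw [Finset.sum_add_distrib, ← Finset.mul_sum, hsumcard] at hsum
  omega
end

section
/- In the hardness instance, if 20·e < 3·n and the allocation A maximizes the Nash product ∏_i v_i(A_i) over all allocations, then v_i(A_i) ≤ 24/5 for every agent i. -/
open Finset

variable {G : Type*}

lemma hardVal_nonneg [DecidableEq G] (T A : Finset G) : 0 ≤ hardVal T A := by
  unfold hardVal; positivity

lemma card_sum_eq [DecidableEq G] (T A : Finset G) :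
    ((A ∩ T).card : ℚ) + ((A \ T).card : ℚ) = (A.card : ℚ) := by
  exact_mod_cast Finset.card_inter_add_card_sdiff A T

lemma hardVal_le_card [DecidableEq G] (T A : Finset G) : hardVal T A ≤ (A.card : ℚ) := by
  have h1 := card_sum_eq T A
  have h2 : (0:ℚ) ≤ ((A \ T).card : ℚ) := by positivity
  unfold hardVal; linarith

lemma le_hardVal [DecidableEq G] (T A : Finset G) : (4/5) * (A.card : ℚ) ≤ hardVal T A := by
  have h1 := card_sum_eq T A
  have h2 : (0:ℚ) ≤ ((A ∩ T).card : ℚ) := by positivity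
  unfold hardVal; linarith

lemma hardVal_pos [DecidableEq G] (T : Finset G) {A : Finset G} (h : A.Nonempty) :
    0 < hardVal T A := by
  have h1 : 1 ≤ (A.card : ℚ) := by exact_mod_cast Finset.card_pos.mpr h
  have := le_hardVal T A
  linarith

lemma hardVal_sdiff [DecidableEq G] {T A : Finset G} {g : G} (hg : g ∈ A) (hgT : g ∉ T) :
    hardVal T (A \ {g}) = hardVal T A - 4/5 := by
  have h1 : (A \ {g}) ∩ T = A ∩ T := by
    ext x
    simp only [mem_inter, mem_sdiff, mem_singleton]
    constructor
    · rintro ⟨⟨hx, _⟩, hxT⟩; exact ⟨hx, hxT⟩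
    · rintro ⟨hx, hxT⟩; exact ⟨⟨hx, fun h => hgT (h ▸ hxT)⟩, hxT⟩
  have h2 : (A \ {g}) \ T = (A \ T).erase g := by
    rw [Finset.sdiff_singleton_eq_erase]
    ext x; simp only [mem_sdiff, mem_erase]; tauto
  have hgAT : g ∈ A \ T := by simp [hg, hgT]
  have h3 : ((A \ T).erase g).card = (A \ T).card - 1 := Finset.card_erase_of_mem hgAT
  have h4 : 1 ≤ (A \ T).card := Finset.card_pos.mpr ⟨g, hgAT⟩
  unfold hardVal
  rw [h1, h2, h3]
  have : (((A \ T).card - 1 : ℕ) : ℚ) = ((A \ T).card : ℚ) - 1 := by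
    push_cast [h4]; ring
  rw [this]; ring

lemma hardVal_insert [DecidableEq G] {T A : Finset G} {g : G} (hg : g ∉ A) :
    hardVal T A + 4/5 ≤ hardVal T (insert g A) := by
  by_cases hgT : g ∈ T
  · have h1 : insert g A ∩ T = insert g (A ∩ T) := by
      ext x; simp only [mem_inter, mem_insert]; constructor
      · rintro ⟨hx | hx, hxT⟩
        · exact Or.inl hx
        · exact Or.inr ⟨hx, hxT⟩
      · rintro (rfl | ⟨hx, hxT⟩)
        · exact ⟨Or.inl rfl, hgT⟩
        · exact ⟨Or.inr hx, hxT⟩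
    have h2 : insert g A \ T = A \ T := by
      ext x; simp only [mem_sdiff, mem_insert]; constructor
      · rintro ⟨hx | hx, hxT⟩
        · exact absurd (hx ▸ hgT) hxT
        · exact ⟨hx, hxT⟩
      · rintro ⟨hx, hxT⟩; exact ⟨Or.inr hx, hxT⟩
    have h3 : (insert g (A ∩ T)).card = (A ∩ T).card + 1 :=
      Finset.card_insert_of_notMem (fun h => hg (Finset.mem_inter.mp h).1)
    unfold hardVal
    rw [h1, h2, h3]
    push_cast; linarith
  · have h1 : insert g A ∩ T = A ∩ T := by
      ext x; simp only [mem_inter, mem_insert]; constructor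
      · rintro ⟨hx | hx, hxT⟩
        · exact absurd (hx ▸ hxT) hgT
        · exact ⟨hx, hxT⟩
      · rintro ⟨hx, hxT⟩; exact ⟨Or.inr hx, hxT⟩
    have h2 : insert g A \ T = insert g (A \ T) := by
      ext x; simp only [mem_sdiff, mem_insert]; constructor
      · rintro ⟨hx | hx, hxT⟩
        · exact Or.inl hx
        · exact Or.inr ⟨hx, hxT⟩
      · rintro (rfl | ⟨hx, hxT⟩)
        · exact ⟨Or.inl rfl, hgT⟩
        · exact ⟨Or.inr hx, hxT⟩
    have h3 : (insert g (A \ T)).card = (A \ T).card + 1 :=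
      Finset.card_insert_of_notMem (fun h => hg (Finset.mem_sdiff.mp h).1)
    unfold hardVal
    rw [h1, h2, h3]
    push_cast; linarith

lemma isAllocation_move {N : Type*} [Fintype N] [DecidableEq N] [Fintype G] [DecidableEq G]
    {A : N → Finset G} (hA : IsAllocation A) {i j : N} (hij : i ≠ j) {g : G} (hg : g ∈ A i) :
    IsAllocation (Function.update (Function.update A i (A i \ {g})) j (insert g (A j))) := by
  set A' := Function.update (Function.update A i (A i \ {g})) j (insert g (A j)) with hA'
  have hdisj : ∀ k l : N, k ≠ l → Disjoint (A k) (A l) :=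
    fun k l hkl => hA.1 (Set.mem_univ k) (Set.mem_univ l) hkl
  have hgnot : ∀ k, k ≠ i → g ∉ A k := fun k hk h =>
    (Finset.disjoint_left.mp (hdisj i k (Ne.symm hk)) hg) h
  have hAi : A' i = A i \ {g} := by
    rw [hA', Function.update_of_ne hij, Function.update_self]
  have hAj : A' j = insert g (A j) := by
    rw [hA', Function.update_self]
  have hAk : ∀ k, k ≠ i → k ≠ j → A' k = A k := fun k hki hkj => by
    rw [hA', Function.update_of_ne hkj, Function.update_of_ne hki]
  have hmem : ∀ k x, x ∈ A' k → x ∈ A k ∨ (k = j ∧ x = g) := by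
    intro k x hx
    by_cases hkj : k = j
    · subst hkj
      rw [hAj, Finset.mem_insert] at hx
      rcases hx with rfl | hx
      · exact Or.inr ⟨rfl, rfl⟩
      · exact Or.inl hx
    · by_cases hki : k = i
      · subst hki; rw [hAi] at hx; exact Or.inl (Finset.mem_sdiff.mp hx).1
      · rw [hAk k hki hkj] at hx; exact Or.inl hx
  have hmemg : ∀ k, g ∈ A' k → k = j := by
    intro k hx
    by_cases hkj : k = j
    · exact hkj
    · by_cases hki : k = i
      · subst hki; rw [hAi, Finset.mem_sdiff, Finset.mem_singleton] at hx
        exact absurd rfl hx.2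
      · rw [hAk k hki hkj] at hx; exact absurd hx (hgnot k hki)
  constructor
  · intro k _ l _ hkl
    rw [Function.onFun, Finset.disjoint_left]
    intro x hxk hxl
    by_cases hxg : x = g
    · subst hxg
      exact hkl ((hmemg k hxk).trans (hmemg l hxl).symm)
    · have hk' : x ∈ A k := by
        rcases hmem k x hxk with h | ⟨_, h⟩
        · exact h
        · exact absurd h hxg
      have hl' : x ∈ A l := by
        rcases hmem l x hxl with h | ⟨_, h⟩
        · exact h
        · exact absurd h hxg
      exact Finset.disjoint_left.mp (hdisj k l hkl) hk' hl'
  · apply Finset.eq_univ_of_forall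
    intro x
    have : x ∈ Finset.univ.biUnion A := by rw [hA.2]; exact Finset.mem_univ x
    obtain ⟨k, _, hk⟩ := Finset.mem_biUnion.mp this
    rw [Finset.mem_biUnion]
    by_cases hxg : x = g
    · refine ⟨j, Finset.mem_univ j, ?_⟩
      rw [hAj, hxg]
      exact Finset.mem_insert_self g _
    · by_cases hki : k = i
      · refine ⟨i, Finset.mem_univ i, ?_⟩
        rw [hAi, Finset.mem_sdiff, Finset.mem_singleton]
        exact ⟨hki ▸ hk, hxg⟩
      · by_cases hkj : k = j
        · refine ⟨j, Finset.mem_univ j, ?_⟩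
          rw [hAj]
          exact Finset.mem_insert_of_mem (hkj ▸ hk)
        · exact ⟨k, Finset.mem_univ k, by rw [hAk k hki hkj]; exact hk⟩

/-- Lemma 5.4: in the hardness instance (with `20e < 3n`), in a Nash-optimal
allocation every agent has valuation at most `4.8 = 24/5`. -/
theorem stmt16 [Fintype G] [DecidableEq G] (n e : ℕ) (hn : 1 ≤ n)
    (V D : Finset G) (hVD : Disjoint V D) (hcover : V ∪ D = (Finset.univ : Finset G))
    (hV : V.card = 4 * n) (hD : D.card = 5 * (2 * n + e))
    (T : Fin (3 * n) → Finset G) (hT : ∀ i, T i ⊆ V ∧ (T i).card = 4)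
    (he : 20 * e < 3 * n)
    (A : Fin (3 * n) → Finset G) (hA : IsAllocation A)
    (hopt : ∀ A' : Fin (3 * n) → Finset G, IsAllocation A' →
      ∏ i, hardVal (T i) (A' i) ≤ ∏ i, hardVal (T i) (A i)) :
    ∀ i : Fin (3 * n), hardVal (T i) (A i) ≤ 24 / 5 := by
  classical
  have hn3 : 0 < 3 * n := by omega
  haveI : Nonempty (Fin (3 * n)) := ⟨⟨0, hn3⟩⟩
  -- total number of goods
  have hcardG : (Finset.univ : Finset G).card = 14 * n + 5 * e := by
    rw [← hcover, Finset.card_union_of_disjoint hVD, hV, hD]; ring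
  -- Step 1: every bundle in A is nonempty (hence hardVal > 0)
  have hembed : Nonempty (Fin (3 * n) ↪ G) := by
    apply Function.Embedding.nonempty_iff_card_le.mpr
    simp only [Fintype.card_fin]
    rw [← Finset.card_univ, hcardG]; omega
  obtain ⟨f⟩ := hembed
  set A0 : Fin (3 * n) → Finset G :=
    fun k => Finset.univ.filter (fun x => Function.invFun f x = k) with hA0def
  have hA0 : IsAllocation A0 := by
    constructor
    · intro k _ l _ hkl
      rw [Function.onFun, Finset.disjoint_left]
      intro x hxk hxl
      simp only [hA0def, Finset.mem_filter] at hxk hxl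
      exact hkl (hxk.2 ▸ hxl.2)
    · apply Finset.eq_univ_of_forall
      intro x
      exact Finset.mem_biUnion.mpr ⟨Function.invFun f x, Finset.mem_univ _, by
        simp [hA0def]⟩
  have hA0ne : ∀ k, (A0 k).Nonempty := by
    intro k
    refine ⟨f k, ?_⟩
    simp only [hA0def, Finset.mem_filter]
    exact ⟨Finset.mem_univ _, Function.leftInverse_invFun f.injective k⟩
  have hprodA0 : 0 < ∏ k, hardVal (T k) (A0 k) :=
    Finset.prod_pos (fun k _ => hardVal_pos _ (hA0ne k))
  have hprodA : 0 < ∏ k, hardVal (T k) (A k) := lt_of_lt_of_le hprodA0 (hopt A0 hA0)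
  have hposA : ∀ k, 0 < hardVal (T k) (A k) := by
    intro k
    rcases lt_or_eq_of_le (hardVal_nonneg (T k) (A k)) with h | h
    · exact h
    · exfalso
      rw [Finset.prod_eq_zero (Finset.mem_univ k) h.symm] at hprodA
      exact lt_irrefl 0 hprodA
  -- main claim
  intro i
  by_contra hbig
  push_neg at hbig
  -- |A i| ≥ 5
  have hcardAi : 5 ≤ (A i).card := by
    have h1 := hardVal_le_card (T i) (A i)
    have : (4:ℚ) < ((A i).card : ℚ) := by linarith
    exact_mod_cast (by exact_mod_cast this : (4:ℕ) < (A i).card)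
  -- exists g ∈ A i \ T i
  have hsd : (A i \ T i).Nonempty := by
    rw [Finset.nonempty_iff_ne_empty]
    intro hemp
    have h0 : ((A i \ T i).card : ℚ) = 0 := by rw [hemp]; simp
    have h1 : (A i ∩ T i).card ≤ 4 := by
      calc (A i ∩ T i).card ≤ (T i).card := Finset.card_le_card (Finset.inter_subset_right)
        _ = 4 := (hT i).2
    have h2 : ((A i ∩ T i).card : ℚ) ≤ 4 := by exact_mod_cast h1
    have : hardVal (T i) (A i) ≤ 4 := by
      unfold hardVal; rw [h0]; linarith
    linarith
  obtain ⟨g, hgmem⟩ := hsd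
  have hgAi : g ∈ A i := (Finset.mem_sdiff.mp hgmem).1
  have hgTi : g ∉ T i := (Finset.mem_sdiff.mp hgmem).2
  -- exists j with |A j| ≤ 4
  have hsum : ∑ k, (A k).card = 14 * n + 5 * e := by
    rw [← hcardG, ← hA.2]
    exact (Finset.card_biUnion (fun x _ y _ hxy =>
      hA.1 (Set.mem_univ x) (Set.mem_univ y) hxy)).symm
  have hj : ∃ j, (A j).card ≤ 4 := by
    by_contra hall
    push_neg at hall
    have : ∑ k, 5 ≤ ∑ k, (A k).card := Finset.sum_le_sum (fun k _ => hall k)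
    rw [Finset.sum_const, Finset.card_univ, Fintype.card_fin, smul_eq_mul, hsum] at this
    omega
  obtain ⟨j, hjcard⟩ := hj
  have hij : i ≠ j := by
    intro h; rw [← h] at hjcard; omega
  -- the improved allocation
  set A' := Function.update (Function.update A i (A i \ {g})) j (insert g (A j)) with hA'def
  have hA' : IsAllocation A' := isAllocation_move hA hij hgAi
  have hle := hopt A' hA'
  -- decompose products
  have hgAj : g ∉ A j :=
    Finset.disjoint_left.mp (hA.1 (Set.mem_univ i) (Set.mem_univ j) hij) hgAi
  have hA'i : A' i = A i \ {g} := by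
    rw [hA'def, Function.update_of_ne hij, Function.update_self]
  have hA'j : A' j = insert g (A j) := by rw [hA'def, Function.update_self]
  have hA'k : ∀ k, k ≠ i → k ≠ j → A' k = A k := fun k hki hkj => by
    rw [hA'def, Function.update_of_ne hkj, Function.update_of_ne hki]
  have hjmem : j ∈ Finset.univ.erase i :=
    Finset.mem_erase.mpr ⟨Ne.symm hij, Finset.mem_univ j⟩
  set s := (Finset.univ.erase i).erase j with hsdef
  have hsplit : ∀ B : Fin (3 * n) → Finset G,
      ∏ k, hardVal (T k) (B k) =
      hardVal (T i) (B i) * (hardVal (T j) (B j) * ∏ k ∈ s, hardVal (T k) (B k)) := by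
    intro B
    rw [← Finset.mul_prod_erase Finset.univ _ (Finset.mem_univ i),
        ← Finset.mul_prod_erase _ _ hjmem]
  have hsame : ∏ k ∈ s, hardVal (T k) (A' k) = ∏ k ∈ s, hardVal (T k) (A k) := by
    apply Finset.prod_congr rfl
    intro k hk
    rw [hsdef] at hk
    have hkj : k ≠ j := (Finset.mem_erase.mp hk).1
    have hki : k ≠ i := (Finset.mem_erase.mp (Finset.mem_erase.mp hk).2).1
    rw [hA'k k hki hkj]
  rw [hsplit A', hsplit A, hsame] at hle
  -- numeric contradiction
  have hP : 0 < ∏ k ∈ s, hardVal (T k) (A k) :=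
    Finset.prod_pos (fun k _ => hposA k)
  have hvi' : hardVal (T i) (A' i) = hardVal (T i) (A i) - 4/5 := by
    rw [hA'i]; exact hardVal_sdiff hgAi hgTi
  have hvj' : hardVal (T j) (A j) + 4/5 ≤ hardVal (T j) (A' j) := by
    rw [hA'j]; exact hardVal_insert hgAj
  have hvj4 : hardVal (T j) (A j) ≤ 4 := by
    have h1 := hardVal_le_card (T j) (A j)
    have h2 : ((A j).card : ℚ) ≤ 4 := by exact_mod_cast hjcard
    linarith
  have hvjpos := hposA j
  have hvipos := hposA i
  set a := hardVal (T i) (A i)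
  set b := hardVal (T j) (A j)
  set a' := hardVal (T i) (A' i)
  set b' := hardVal (T j) (A' j)
  have ha' : (4:ℚ) < a' := by rw [hvi']; linarith
  have hstrict : a * b < a' * b' := by
    have h1 : a' * (b + 4/5) ≤ a' * b' := by
      apply mul_le_mul_of_nonneg_left hvj' (by linarith)
    have h2 : a * b < a' * (b + 4/5) := by
      rw [hvi']; nlinarith
    linarith
  nlinarith [mul_lt_mul_of_pos_right hstrict hP]
end

section
/- In the hardness instance, suppose e ≤ n and there exists a set M of agents with |M| = n − e such that the sets T_i for i ∈ M are pairwise disjoint (a matching of size n − e). Then there exists an allocation A with v_i(A_i) ≥ 4 for every agent i; in particular the Nash product satisfies ∏_i v_i(A_i) ≥ 4^{3n}. -/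
open Finset

variable {G : Type*}

lemma hardVal_ge_of_card [DecidableEq G] (T A : Finset G) (h : 5 ≤ A.card) :
    4 ≤ hardVal T A := by
  have hsum : (A ∩ T).card + (A \ T).card = A.card := Finset.card_inter_add_card_sdiff A T
  have h5 : (5 : ℚ) ≤ ((A ∩ T).card : ℚ) + ((A \ T).card : ℚ) := by
    have : 5 ≤ (A ∩ T).card + (A \ T).card := by omega
    exact_mod_cast this
  have ha : (0 : ℚ) ≤ ((A ∩ T).card : ℚ) := Nat.cast_nonneg _
  unfold hardVal
  linarith

lemma part_lemma {ι : Type*} [DecidableEq ι] [DecidableEq G] :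
    ∀ (k : ℕ) (I : Finset ι) (R : Finset G), I.card = k → I.Nonempty →
      5 * I.card ≤ R.card →
      ∃ B : ι → Finset G, (↑I : Set ι).PairwiseDisjoint B ∧ I.biUnion B = R ∧
        ∀ i ∈ I, 5 ≤ (B i).card := by
  intro k
  induction k with
  | zero =>
    intro I R hcard hne _
    rw [Finset.card_eq_zero] at hcard
    simp [hcard] at hne
  | succ k ih =>
    intro I R hcard hne hle
    obtain ⟨a, ha⟩ := hne
    by_cases hk : k = 0
    · subst hk
      have hI : I = {a} := by
        rw [Finset.eq_singleton_iff_unique_mem]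
        refine ⟨ha, fun x hx => ?_⟩
        by_contra hxa
        have : 2 ≤ I.card := Finset.one_lt_card.mpr ⟨x, hx, a, ha, hxa⟩
        omega
      refine ⟨fun i => if i = a then R else ∅, ?_, ?_, ?_⟩
      · intro x hx y hy hxy
        simp [hI] at hx hy
        exact absurd (hx.trans hy.symm) hxy
      · simp [hI]
      · intro i hi
        rw [hI, Finset.mem_singleton] at hi
        simp [hi]
        omega
    · have hR5 : 5 ≤ R.card := by omega
      obtain ⟨R₀, hR₀sub, hR₀card⟩ := Finset.exists_subset_card_eq hR5
      set R' := R \ R₀ with hR'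
      have hR'card : R'.card = R.card - 5 := by
        rw [hR', Finset.card_sdiff_of_subset hR₀sub, hR₀card]
      have herase : (I.erase a).card = k := by
        rw [Finset.card_erase_of_mem ha]; omega
      have hne' : (I.erase a).Nonempty := Finset.card_pos.mp (by omega)
      have hle' : 5 * (I.erase a).card ≤ R'.card := by omega
      obtain ⟨B', hB'disj, hB'union, hB'card⟩ := ih (I.erase a) R' herase hne' hle'
      have hB'sub : ∀ i ∈ I.erase a, B' i ⊆ R' := by
        intro i hi
        rw [← hB'union]
        exact Finset.subset_biUnion_of_mem B' hi
      refine ⟨fun i => if i = a then R₀ else B' i, ?_, ?_, ?_⟩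
      · intro x hx y hy hxy
        simp only [Set.mem_setOf_eq, Finset.coe_mem, Finset.mem_coe] at hx hy
        unfold Function.onFun
        by_cases hxa : x = a
        · have hya : y ≠ a := fun h => hxy (hxa.trans h.symm)
          subst hxa
          dsimp only
          rw [if_pos rfl, if_neg hya]
          have : B' y ⊆ R' := hB'sub y (Finset.mem_erase.mpr ⟨hya, hy⟩)
          exact Finset.disjoint_sdiff.mono_right this
        · by_cases hya : y = a
          · subst hya
            dsimp only
            rw [if_neg hxa, if_pos rfl]
            have : B' x ⊆ R' := hB'sub x (Finset.mem_erase.mpr ⟨hxa, hx⟩)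
            exact Finset.sdiff_disjoint.mono_left this
          · simp only [if_neg hxa, if_neg hya]
            exact hB'disj (Finset.mem_coe.mpr (Finset.mem_erase.mpr ⟨hxa, hx⟩))
              (Finset.mem_coe.mpr (Finset.mem_erase.mpr ⟨hya, hy⟩)) hxy
      · have hins : I = insert a (I.erase a) := (Finset.insert_erase ha).symm
        rw [hins, Finset.biUnion_insert]
        have : ((I.erase a).biUnion fun i => if i = a then R₀ else B' i)
            = (I.erase a).biUnion B' := by
          apply Finset.biUnion_congr rfl
          intro i hi
          rw [if_neg (Finset.mem_erase.mp hi).1]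
        rw [this, hB'union, if_pos rfl]
        exact Finset.union_sdiff_of_subset hR₀sub
      · intro i hi
        by_cases hia : i = a
        · simp [hia, hR₀card]
        · simp only [if_neg hia]
          exact hB'card i (Finset.mem_erase.mpr ⟨hia, hi⟩)

/-- Completeness: if there is a matching of size `n − e` (with `e ≤ n`), then there is
an allocation giving every agent valuation at least 4; in particular the Nash product
is at least `4 ^ (3n)`. -/
theorem stmt17 [Fintype G] [DecidableEq G] (n e : ℕ) (hn : 1 ≤ n) (hen : e ≤ n)
    (V D : Finset G) (hVD : Disjoint V D) (hcover : V ∪ D = (Finset.univ : Finset G))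
    (hV : V.card = 4 * n) (hD : D.card = 5 * (2 * n + e))
    (T : Fin (3 * n) → Finset G) (hT : ∀ i, T i ⊆ V ∧ (T i).card = 4)
    (M : Finset (Fin (3 * n))) (hM : M.card = n - e)
    (hmatch : (M : Set (Fin (3 * n))).PairwiseDisjoint T) :
    ∃ A : Fin (3 * n) → Finset G, IsAllocation A ∧
      (∀ i : Fin (3 * n), 4 ≤ hardVal (T i) (A i)) ∧
      (4 : ℚ) ^ (3 * n) ≤ ∏ i, hardVal (T i) (A i) := by
  classical
  set S : Finset G := M.biUnion T with hS
  have hScard : S.card = 4 * (n - e) := by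
    rw [hS, Finset.card_biUnion (fun i hi j hj hij =>
      hmatch (Finset.mem_coe.mpr hi) (Finset.mem_coe.mpr hj) hij)]
    rw [Finset.sum_congr rfl (fun i _ => (hT i).2)]
    rw [Finset.sum_const, smul_eq_mul, hM]
    ring
  have hGcard : (Finset.univ : Finset G).card = 14 * n + 5 * e := by
    rw [← hcover, Finset.card_union_of_disjoint hVD, hV, hD]; ring
  set R : Finset G := Finset.univ \ S with hR
  have hRcard : R.card = (14 * n + 5 * e) - 4 * (n - e) := by
    rw [hR, Finset.card_sdiff_of_subset (Finset.subset_univ S), hGcard, hScard]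
  set I : Finset (Fin (3 * n)) := Finset.univ \ M with hI
  have hIcard : I.card = 3 * n - (n - e) := by
    rw [hI, Finset.card_sdiff_of_subset (Finset.subset_univ M), Finset.card_univ,
      Fintype.card_fin, hM]
  have hIne : I.Nonempty := by
    apply Finset.card_pos.mp
    omega
  have hle : 5 * I.card ≤ R.card := by omega
  obtain ⟨B, hBdisj, hBunion, hBcard⟩ := part_lemma I.card I R rfl hIne hle
  have hBsub : ∀ i ∈ I, B i ⊆ R := by
    intro i hi
    rw [← hBunion]
    exact Finset.subset_biUnion_of_mem B hi
  refine ⟨fun i => if i ∈ M then T i else B i, ⟨?_, ?_⟩, ?_, ?_⟩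
  · intro x _ y _ hxy
    unfold Function.onFun
    have hTS : ∀ i ∈ M, T i ⊆ S := fun i hi => Finset.subset_biUnion_of_mem T hi
    have hBR : ∀ i, i ∉ M → B i ⊆ R := fun i hi =>
      hBsub i (Finset.mem_sdiff.mpr ⟨Finset.mem_univ i, hi⟩)
    by_cases hx : x ∈ M <;> by_cases hy : y ∈ M
    · simp only [if_pos hx, if_pos hy]
      exact hmatch (Finset.mem_coe.mpr hx) (Finset.mem_coe.mpr hy) hxy
    · simp only [if_pos hx, if_neg hy]
      exact Finset.disjoint_sdiff.mono (hTS x hx) (hBR y hy)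
    · simp only [if_neg hx, if_pos hy]
      exact Finset.sdiff_disjoint.mono (hBR x hx) (hTS y hy)
    · simp only [if_neg hx, if_neg hy]
      exact hBdisj (Finset.mem_coe.mpr (Finset.mem_sdiff.mpr ⟨Finset.mem_univ x, hx⟩))
        (Finset.mem_coe.mpr (Finset.mem_sdiff.mpr ⟨Finset.mem_univ y, hy⟩)) hxy
  · have huniv : (Finset.univ : Finset (Fin (3 * n))) = M ∪ I := by
      rw [hI, Finset.union_sdiff_of_subset (Finset.subset_univ M)]
    have hbi : ∀ (s t : Finset (Fin (3 * n))) (f : Fin (3 * n) → Finset G),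
        (s ∪ t).biUnion f = s.biUnion f ∪ t.biUnion f := by
      intro s t f
      ext x
      simp only [Finset.mem_biUnion, Finset.mem_union]
      constructor
      · rintro ⟨i, hi | hi, hx⟩
        · exact Or.inl ⟨i, hi, hx⟩
        · exact Or.inr ⟨i, hi, hx⟩
      · rintro (⟨i, hi, hx⟩ | ⟨i, hi, hx⟩)
        · exact ⟨i, Or.inl hi, hx⟩
        · exact ⟨i, Or.inr hi, hx⟩
    rw [huniv, hbi]
    have h1 : (M.biUnion fun i => if i ∈ M then T i else B i) = S := by
      rw [hS]
      exact Finset.biUnion_congr rfl (fun i hi => if_pos hi)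
    have h2 : (I.biUnion fun i => if i ∈ M then T i else B i) = R := by
      rw [← hBunion]
      exact Finset.biUnion_congr rfl
        (fun i hi => if_neg (Finset.mem_sdiff.mp hi).2)
    rw [h1, h2, hR, Finset.union_sdiff_of_subset (Finset.subset_univ S)]
  · intro i
    by_cases hi : i ∈ M
    · simp only [if_pos hi]
      unfold hardVal
      rw [Finset.inter_self, Finset.sdiff_self, (hT i).2]
      norm_num
    · simp only [if_neg hi]
      exact hardVal_ge_of_card _ _
        (hBcard i (Finset.mem_sdiff.mpr ⟨Finset.mem_univ i, hi⟩))
  · have h4 : ∀ i : Fin (3 * n), 4 ≤ hardVal (T i) (if i ∈ M then T i else B i) := by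
      intro i
      by_cases hi : i ∈ M
      · simp only [if_pos hi]
        unfold hardVal
        rw [Finset.inter_self, Finset.sdiff_self, (hT i).2]
        norm_num
      · simp only [if_neg hi]
        exact hardVal_ge_of_card _ _
          (hBcard i (Finset.mem_sdiff.mpr ⟨Finset.mem_univ i, hi⟩))
    calc (4 : ℚ) ^ (3 * n) = ∏ _i : Fin (3 * n), (4 : ℚ) := by
          rw [Finset.prod_const, Finset.card_univ, Fintype.card_fin]
      _ ≤ ∏ i, hardVal (T i) (if i ∈ M then T i else B i) :=
          Finset.prod_le_prod (fun i _ => by norm_num) (fun i _ => h4 i)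
end
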